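/- For all a, r ∈ ℕ and all l ∈ ℕ with 1 ≤ l ≤ n, one has Σ_{i=0}^{l} (−1)^i C(l,i) Σ_{j=0}^{n−l+1} (−1)^{n−l+1+j} C(n−l+1,j) · (a+r+j, r+i+j)‾ = 0 in ℂ^{Λ_{2,n}}. Equivalently, for every α = (α₁,α₂) ∈ Λ_{2,n}: Σ_{i=0}^{l} Σ_{j=0}^{n−l+1} (−1)^{n−l+1+i+j} C(l,i) C(n−l+1,j) C(a+r+j, α₁) C(r+i+j, α₂) = 0. -/

import Mathlib

open Finset

section Aux
open Polynomial


lemma alt_choose_sum (m : ℕ) :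
    ∑ s ∈ range (m+1), (-1:ℂ)^s * (m.choose s : ℂ) = if m = 0 then 1 else 0 := by
  have h := Int.alternating_sum_range_choose (n := m)
  have h2 : ((∑ s ∈ range (m+1), ((-1)^s * m.choose s : ℤ) : ℤ) : ℂ)
      = ∑ s ∈ range (m+1), (-1:ℂ)^s * (m.choose s : ℂ) := by
    push_cast; rfl
  rw [← h2, h]; split <;> simp

lemma Srec (m : ℕ) (f : ℕ → ℂ) :
    ∑ j ∈ range (m+2), (-1:ℂ)^j * ((m+1).choose j : ℂ) * f j =
      (∑ j ∈ range (m+1), (-1:ℂ)^j * (m.choose j : ℂ) * f j)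
      - ∑ j ∈ range (m+1), (-1:ℂ)^j * (m.choose j : ℂ) * f (j+1) := by
  rw [Finset.sum_range_succ']
  have h1 : ∀ j, ((m+1).choose (j+1) : ℂ) = (m.choose j : ℂ) + (m.choose (j+1) : ℂ) := by
    intro j; rw [Nat.choose_succ_succ]; push_cast; ring
  have expand : ∑ j ∈ range (m+1), (-1:ℂ)^(j+1) * ((m+1).choose (j+1) : ℂ) * f (j+1)
      = (∑ j ∈ range (m+1), (-1:ℂ)^(j+1) * (m.choose j : ℂ) * f (j+1))
        + ∑ j ∈ range (m+1), (-1:ℂ)^(j+1) * (m.choose (j+1) : ℂ) * f (j+1) := by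
    rw [← Finset.sum_add_distrib]; apply Finset.sum_congr rfl; intro j _
    rw [h1]; ring
  rw [expand]
  have h2 : ∑ j ∈ range (m+1), (-1:ℂ)^(j+1) * (m.choose (j+1) : ℂ) * f (j+1)
      = (∑ j ∈ range (m+1), (-1:ℂ)^j * (m.choose j : ℂ) * f j) - f 0 := by
    rw [Finset.sum_range_succ, Nat.choose_succ_self,
      Finset.sum_range_succ' (fun j => (-1:ℂ)^j * (m.choose j : ℂ) * f j) m]
    simp
  rw [h2]
  have h3 : ∑ j ∈ range (m+1), (-1:ℂ)^(j+1) * (m.choose j : ℂ) * f (j+1)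
      = - ∑ j ∈ range (m+1), (-1:ℂ)^j * (m.choose j : ℂ) * f (j+1) := by
    rw [← Finset.sum_neg_distrib]; apply Finset.sum_congr rfl; intro j _; ring
  rw [h3]; simp; ring

lemma altsum (m : ℕ) (f : ℕ → ℂ) (p : Polynomial ℂ) (hdeg : p.degree < m)
    (hf : ∀ j : ℕ, f j = p.eval (j : ℂ)) :
    ∑ j ∈ range (m+1), (-1:ℂ)^j * (m.choose j : ℂ) * f j = 0 := by
  induction m generalizing f p with
  | zero =>
    have hp : p = 0 := by
      rw [← Polynomial.degree_eq_bot]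
      exact Nat.WithBot.lt_zero_iff.mp (by exact_mod_cast hdeg)
    simp [hf 0, hp]
  | succ m ih =>
    rw [show m + 1 + 1 = m + 2 from rfl, Srec]
    by_cases hp0 : p = 0
    · simp [hf, hp0]
    have hXC : (X + C (1:ℂ)).natDegree = 1 := Polynomial.natDegree_X_add_C 1
    have hlc : (p.comp (X + C 1)).leadingCoeff = p.leadingCoeff := by
      rw [Polynomial.leadingCoeff_comp (by rw [hXC]; norm_num)]
      rw [(Polynomial.monic_X_add_C (1:ℂ)).leadingCoeff, one_pow, mul_one]
    have hcne : p.comp (X + C (1:ℂ)) ≠ 0 := by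
      intro h
      apply hp0
      rw [← Polynomial.leadingCoeff_eq_zero, ← hlc, h, Polynomial.leadingCoeff_zero]
    have hcompdeg : (p.comp (X + C 1)).degree = p.degree := by
      rw [Polynomial.degree_eq_natDegree hcne, Polynomial.degree_eq_natDegree hp0,
        Polynomial.natDegree_comp, hXC, mul_one]
    set q : Polynomial ℂ := p - p.comp (X + C 1) with hq
    have hqd : q.degree < p.degree :=
      Polynomial.degree_sub_lt hcompdeg.symm hp0 hlc.symm
    have hnatlt : p.natDegree < m+1 := by
      have hd := Polynomial.degree_eq_natDegree hp0
      rw [hd] at hdeg; exact_mod_cast hdeg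
    have hpm : p.degree ≤ (m : WithBot ℕ) := by
      rw [Polynomial.degree_eq_natDegree hp0]
      exact_mod_cast Nat.lt_succ_iff.mp hnatlt
    have hqm : q.degree < (m : WithBot ℕ) := lt_of_lt_of_le hqd hpm
    have hfq : ∀ j : ℕ, f j - f (j+1) = q.eval (j : ℂ) := by
      intro j
      rw [hq, Polynomial.eval_sub, Polynomial.eval_comp]
      simp [hf j, hf (j+1)]
    have hsplit : (∑ j ∈ range (m+1), (-1:ℂ)^j * (m.choose j : ℂ) * f j)
        - (∑ j ∈ range (m+1), (-1:ℂ)^j * (m.choose j : ℂ) * f (j+1))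
        = ∑ j ∈ range (m+1), (-1:ℂ)^j * (m.choose j : ℂ) * (f j - f (j+1)) := by
      rw [← Finset.sum_sub_distrib]; apply Finset.sum_congr rfl; intro j _; ring
    rw [hsplit]
    exact ih (fun j => f j - f (j+1)) q hqm hfq

lemma choose_poly (x c : ℕ) :
    ∃ p : Polynomial ℂ, p.degree ≤ c ∧ ∀ j : ℕ, p.eval (j : ℂ) = (((x+j).choose c : ℕ) : ℂ) := by
  refine ⟨(c.factorial : ℂ)⁻¹ • (descPochhammer ℂ c).comp (X + C (x:ℂ)), ?_, ?_⟩
  · calc ((c.factorial : ℂ)⁻¹ • (descPochhammer ℂ c).comp (X + C (x:ℂ))).degree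
        ≤ ((descPochhammer ℂ c).comp (X + C (x:ℂ))).degree := Polynomial.degree_smul_le _ _
      _ ≤ c := by
        apply Polynomial.degree_le_natDegree.trans
        rw [Polynomial.natDegree_comp, Polynomial.natDegree_X_add_C, mul_one,
          descPochhammer_natDegree]
  · intro j
    rw [Polynomial.eval_smul, Polynomial.eval_comp]
    simp only [Polynomial.eval_add, Polynomial.eval_X, Polynomial.eval_C, smul_eq_mul]
    have : ((j:ℂ) + (x:ℂ)) = ((j + x : ℕ) : ℂ) := by push_cast; ring
    rw [this, descPochhammer_eval_eq_descFactorial,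
      Nat.descFactorial_eq_factorial_mul_choose]
    rw [Nat.add_comm j x]
    push_cast
    rw [← mul_assoc, inv_mul_cancel₀ (by exact_mod_cast Nat.factorial_ne_zero c), one_mul]

lemma alt_choose_choose (l u : ℕ) :
    ∑ i ∈ range (l+1), (-1:ℂ)^i * (l.choose i : ℂ) * (i.choose u : ℂ)
      = if u = l then (-1:ℂ)^l else 0 := by
  by_cases hul : u ≤ l
  · have hsub : Finset.Ico u (l+1) ⊆ range (l+1) := by
      intro i hi; simp at hi ⊢; exact hi.2
    rw [← Finset.sum_subset hsub (by
      intro i hi hni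
      simp only [Finset.mem_range, Finset.mem_Ico, not_and, not_le] at hi hni
      have hiu : i < u := by
        by_contra h
        push_neg at h
        exact absurd hi (by simpa using hni h)
      rw [Nat.choose_eq_zero_of_lt hiu]; ring)]
    rw [Finset.sum_Ico_eq_sum_range]
    have hre : ∀ s ∈ range (l + 1 - u), (-1:ℂ)^(u+s) * (l.choose (u+s) : ℂ) * ((u+s).choose u : ℂ)
        = ((-1:ℂ)^u * (l.choose u : ℂ)) * ((-1:ℂ)^s * ((l-u).choose s : ℂ)) := by
      intro s hs
      simp only [Finset.mem_range] at hs
      have h1 : l.choose (u+s) * (u+s).choose u = l.choose u * (l-u).choose s := by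
        have := Nat.choose_mul (n := l) (k := u+s) (s := u) (by omega)
        simpa using this
      have : ((l.choose (u+s) * (u+s).choose u : ℕ) : ℂ) = ((l.choose u * (l-u).choose s : ℕ) : ℂ) := by
        rw [h1]
      push_cast at this
      calc (-1:ℂ)^(u+s) * (l.choose (u+s) : ℂ) * ((u+s).choose u : ℂ)
          = (-1:ℂ)^(u+s) * ((l.choose (u+s):ℂ) * ((u+s).choose u : ℂ)) := by ring
        _ = (-1:ℂ)^(u+s) * ((l.choose u:ℂ) * ((l-u).choose s : ℂ)) := by rw [this]
        _ = ((-1:ℂ)^u * (l.choose u : ℂ)) * ((-1:ℂ)^s * ((l-u).choose s : ℂ)) := by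
            rw [pow_add]; ring
    rw [Finset.sum_congr rfl hre, ← Finset.mul_sum]
    have : l + 1 - u = (l - u) + 1 := by omega
    rw [this, alt_choose_sum (l-u)]
    by_cases h : u = l
    · subst h; simp
    · rw [if_neg (by omega), if_neg h, mul_zero]
  · rw [if_neg (by omega)]
    apply Finset.sum_eq_zero
    intro i hi
    simp only [Finset.mem_range] at hi
    rw [Nat.choose_eq_zero_of_lt (show i < u by omega)]; ring

lemma key (n a r l : ℕ) (hln : l ≤ n) (α₁ α₂ : ℕ) (hα : α₁ + α₂ ≤ n) :
    ∑ i ∈ range (l+1), ∑ j ∈ range (n-l+2),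
      (-1:ℂ)^(n-l+1+i+j) * (l.choose i : ℂ) * ((n-l+1).choose j : ℂ) *
        ((a+r+j).choose α₁ : ℂ) * ((r+i+j).choose α₂ : ℂ) = 0 := by
  set m := n - l + 1 with hm
  have hm2 : n - l + 2 = m + 1 := by omega
  rw [hm2]
  -- expand the last choose via Vandermonde
  have hexp : ∀ i j : ℕ, (((r+i+j).choose α₂ : ℕ) : ℂ)
      = ∑ p ∈ Finset.HasAntidiagonal.antidiagonal α₂, ((i.choose p.1 : ℕ) : ℂ) * (((r+j).choose p.2 : ℕ) : ℂ) := by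
    intro i j
    have h1 : r + i + j = i + (r + j) := by omega
    rw [h1, Nat.add_choose_eq]
    push_cast
    rfl
  have step1 : ∀ i ∈ range (l+1), ∀ j ∈ range (m+1),
      (-1:ℂ)^(m+i+j) * (l.choose i : ℂ) * (m.choose j : ℂ) *
        ((a+r+j).choose α₁ : ℂ) * ((r+i+j).choose α₂ : ℂ)
      = ∑ p ∈ Finset.HasAntidiagonal.antidiagonal α₂,
          (-1:ℂ)^(m+i+j) * (l.choose i : ℂ) * (m.choose j : ℂ) *
            ((a+r+j).choose α₁ : ℂ) * ((i.choose p.1 : ℂ) * ((r+j).choose p.2 : ℂ)) := by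
    intro i _ j _
    rw [hexp i j, Finset.mul_sum]
  calc ∑ i ∈ range (l+1), ∑ j ∈ range (m+1),
        (-1:ℂ)^(m+i+j) * (l.choose i : ℂ) * (m.choose j : ℂ) *
          ((a+r+j).choose α₁ : ℂ) * ((r+i+j).choose α₂ : ℂ)
      = ∑ p ∈ Finset.HasAntidiagonal.antidiagonal α₂, ∑ j ∈ range (m+1), ∑ i ∈ range (l+1),
          (-1:ℂ)^(m+i+j) * (l.choose i : ℂ) * (m.choose j : ℂ) *
            ((a+r+j).choose α₁ : ℂ) * ((i.choose p.1 : ℂ) * ((r+j).choose p.2 : ℂ)) := by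
        rw [Finset.sum_congr rfl (fun i hi => Finset.sum_congr rfl (fun j hj => step1 i hi j hj))]
        rw [Finset.sum_comm]
        rw [Finset.sum_congr rfl (fun j _ => Finset.sum_comm), Finset.sum_comm]
    _ = 0 := by
        apply Finset.sum_eq_zero
        intro p hp
        have hpsum : p.1 + p.2 = α₂ := Finset.HasAntidiagonal.mem_antidiagonal.mp hp
        by_cases hpl : p.1 = l
        · -- inner sum over i gives (-1)^l; then alternating j-sum of a poly of degree < m
          have hinner : ∀ j ∈ range (m+1),
              ∑ i ∈ range (l+1),
                (-1:ℂ)^(m+i+j) * (l.choose i : ℂ) * (m.choose j : ℂ) *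
                  ((a+r+j).choose α₁ : ℂ) * ((i.choose p.1 : ℂ) * ((r+j).choose p.2 : ℂ))
              = (-1:ℂ)^(m+l+j) * (m.choose j : ℂ) * (((a+r+j).choose α₁ : ℂ) * ((r+j).choose p.2 : ℂ)) := by
            intro j _
            have : ∀ i ∈ range (l+1),
                (-1:ℂ)^(m+i+j) * (l.choose i : ℂ) * (m.choose j : ℂ) *
                  ((a+r+j).choose α₁ : ℂ) * ((i.choose p.1 : ℂ) * ((r+j).choose p.2 : ℂ))
                = ((-1:ℂ)^(m+j) * (m.choose j : ℂ) * (((a+r+j).choose α₁ : ℂ) * ((r+j).choose p.2 : ℂ)))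
                  * ((-1:ℂ)^i * (l.choose i : ℂ) * (i.choose p.1 : ℂ)) := by
              intro i _
              rw [show m+i+j = i + (m+j) by omega, pow_add]
              ring
            rw [Finset.sum_congr rfl this, ← Finset.mul_sum, alt_choose_choose l p.1,
              if_pos hpl, show m+l+j = l + (m+j) by omega, pow_add]
            ring
          rw [Finset.sum_congr rfl hinner]
          obtain ⟨p₁, hd1, he1⟩ := choose_poly (a+r) α₁
          obtain ⟨p₂, hd2, he2⟩ := choose_poly r p.2
          have hdeg : (p₁ * p₂).degree < (m : WithBot ℕ) := by
            calc (p₁ * p₂).degree = p₁.degree + p₂.degree := Polynomial.degree_mul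
              _ ≤ (α₁ : WithBot ℕ) + (p.2 : WithBot ℕ) := add_le_add hd1 hd2
              _ = ((α₁ + p.2 : ℕ) : WithBot ℕ) := by push_cast; rfl
              _ < (m : WithBot ℕ) := by
                  have : α₁ + p.2 < m := by omega
                  exact_mod_cast this
          have heval : ∀ j : ℕ,
              ((a+r+j).choose α₁ : ℂ) * ((r+j).choose p.2 : ℂ) = (p₁ * p₂).eval (j : ℂ) := by
            intro j
            rw [Polynomial.eval_mul, he1 j, he2 j]
          have hz := altsum m (fun j => ((a+r+j).choose α₁ : ℂ) * ((r+j).choose p.2 : ℂ))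
            (p₁ * p₂) hdeg heval
          calc ∑ j ∈ range (m+1),
                (-1:ℂ)^(m+l+j) * (m.choose j : ℂ) * (((a+r+j).choose α₁ : ℂ) * ((r+j).choose p.2 : ℂ))
              = (-1:ℂ)^(m+l) * ∑ j ∈ range (m+1),
                  (-1:ℂ)^j * (m.choose j : ℂ) * (((a+r+j).choose α₁ : ℂ) * ((r+j).choose p.2 : ℂ)) := by
                rw [Finset.mul_sum]
                apply Finset.sum_congr rfl; intro j _
                rw [show m+l+j = (m+l) + j by omega, pow_add]; ring
            _ = 0 := by rw [hz, mul_zero]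
        · apply Finset.sum_eq_zero
          intro j _
          have : ∀ i ∈ range (l+1),
              (-1:ℂ)^(m+i+j) * (l.choose i : ℂ) * (m.choose j : ℂ) *
                ((a+r+j).choose α₁ : ℂ) * ((i.choose p.1 : ℂ) * ((r+j).choose p.2 : ℂ))
              = ((-1:ℂ)^(m+j) * (m.choose j : ℂ) * (((a+r+j).choose α₁ : ℂ) * ((r+j).choose p.2 : ℂ)))
                * ((-1:ℂ)^i * (l.choose i : ℂ) * (i.choose p.1 : ℂ)) := by
            intro i _
            rw [show m+i+j = i + (m+j) by omega, pow_add]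
            ring
          rw [Finset.sum_congr rfl this, ← Finset.mul_sum, alt_choose_choose l p.1,
            if_neg hpl, mul_zero]

end Aux

/-- `Λ_{2,n}`: pairs `α ∈ ℕ²` with `1 ≤ α₁ + α₂ ≤ n`. -/
def Lam2 (n : ℕ) : Finset (ℕ × ℕ) :=
  ((range (n+1)) ×ˢ (range (n+1))).filter (fun α => 1 ≤ α.1 + α.2 ∧ α.1 + α.2 ≤ n)

/-- `v̄ ∈ ℂ^{Λ_{2,n}}`, with `α`-coordinate `C(v₁,α₁)·C(v₂,α₂)`. -/
noncomputable def vbar (n : ℕ) (v : ℕ × ℕ) : (Lam2 n) → ℂ :=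
  fun α => ((v.1.choose α.1.1 * v.2.choose α.1.2 : ℕ) : ℂ)

/-- `Λ_{3,n}`: triples `β ∈ ℕ³` with `1 ≤ β₁ + β₂ + β₃ ≤ n`. -/
def Lam3 (n : ℕ) : Finset (ℕ × ℕ × ℕ) :=
  ((range (n+1)) ×ˢ (range (n+1)) ×ˢ (range (n+1))).filter
    (fun β => 1 ≤ β.1 + β.2.1 + β.2.2 ∧ β.1 + β.2.1 + β.2.2 ≤ n)

/-- The linear map `A_n : ℕ³ → ℕ²` with matrix rows `(1,1,n)` and `(0,1,n+1)`. -/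
def Amap (n : ℕ) (β : ℕ × ℕ × ℕ) : ℕ × ℕ :=
  (β.1 + β.2.1 + n * β.2.2, β.2.1 + (n+1) * β.2.2)

/-- `c_β = Σ_{γ ≤ β} (−1)^{|β−γ|} C(β,γ) (A_nγ)‾`. -/
noncomputable def cvec (n : ℕ) (β : ℕ × ℕ × ℕ) : (Lam2 n) → ℂ :=
  ∑ γ ∈ (range (β.1+1)) ×ˢ (range (β.2.1+1)) ×ˢ (range (β.2.2+1)),
    (((-1 : ℂ) ^ ((β.1 + β.2.1 + β.2.2) - (γ.1 + γ.2.1 + γ.2.2))) *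
      ((β.1.choose γ.1 * β.2.1.choose γ.2.1 * β.2.2.choose γ.2.2 : ℕ) : ℂ)) •
      vbar n (Amap n γ)

/-- `J ∈ S_{A_n}`: `J ⊆ Λ_{3,n}`, `|J| = λ_{2,n}`, `det L^c_J ≠ 0`. -/
def memSA (n : ℕ) (J : Finset (ℕ × ℕ × ℕ)) : Prop :=
  J ⊆ Lam3 n ∧ J.card = (Lam2 n).card ∧
    ∀ e : (Lam2 n) ≃ J,
      (Matrix.of fun i j : (Lam2 n) => cvec n (e i).1 j).det ≠ 0

/-- `m_J = Σ_{β ∈ J} A_nβ`. -/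
def mJ (n : ℕ) (J : Finset (ℕ × ℕ × ℕ)) : ℕ × ℕ := ∑ β ∈ J, Amap n β

/-- `f_k(v) = k·v₁ + (1−k)·v₂`. -/
def fk (k : ℕ) (v : ℕ × ℕ) : ℤ := (k : ℤ) * v.1 + (1 - (k : ℤ)) * v.2

/-- Data of a sequence `η = (z, d₀, d₁, …, d_r)`. -/
structure OmegaData where
  r : ℕ
  z : Bool
  d : ℕ → ℕ

/-- `η ∈ Ω`: `d₀ = 0`, `d_i ≥ 1` for `1 ≤ i ≤ r` (and `d_i = 0` beyond `r`),
and `d₀ + ⋯ + d_r = n`. -/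
def OmegaData.IsOmega (n : ℕ) (η : OmegaData) : Prop :=
  η.d 0 = 0 ∧ (∀ i, 1 ≤ i → i ≤ η.r → 1 ≤ η.d i) ∧
  (∀ i, η.r < i → η.d i = 0) ∧
  (∑ i ∈ range (η.r + 1), η.d i) = n

/-- The unique `t` with `Σ_{i=0}^{t−1} d_i < j ≤ Σ_{i=0}^{t} d_i`. -/
noncomputable def tIdx (η : OmegaData) (j : ℕ) : ℕ :=
  sInf {t | j ≤ ∑ i ∈ range (t+1), η.d i}

/-- The vector `v_{j,η} ∈ ℕ²`. -/
noncomputable def vvec (η : OmegaData) (j : ℕ) : ℕ × ℕ :=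
  let t := tIdx η j
  let c := j - ∑ i ∈ range t, η.d i
  let a := (∑ i ∈ range t, if (Odd i ↔ Odd t) then η.d i else 0) + c
  if (η.z = true) ↔ Odd t then (a, 0) else (0, a)

/-- `T_{j,η}` for `1 ≤ j ≤ n`, and `T_{0,η} = {(1,1),…,(n,n)}`. -/
noncomputable def Tj (n : ℕ) (η : OmegaData) (j : ℕ) : Finset (ℕ × ℕ) :=
  if j = 0 then (range n).image (fun q => (q+1, q+1))
  else (range (n - j + 1)).image (fun p => vvec η j + (p, p))

/-- `T_η = ⋃_{j=0}^{n} T_{j,η}`. -/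
noncomputable def Tset (n : ℕ) (η : OmegaData) : Finset (ℕ × ℕ) :=
  (range (n+1)).biUnion (fun j => Tj n η j)

/-- `r_{i,η} = n·π₂(v_{i,η})`. -/
noncomputable def rshift (n : ℕ) (η : OmegaData) (i : ℕ) : ℕ := n * (vvec η i).2

/-- `T'_η = T_{0,η} ∪ ⋃_{i=1}^{n} (T_{i,η} + r_{i,η})`. -/
noncomputable def Tset' (n : ℕ) (η : OmegaData) : Finset (ℕ × ℕ) :=
  Tj n η 0 ∪ (Finset.Icc 1 n).biUnion
    (fun i => (Tj n η i).image (fun v => v + (rshift n η i, rshift n η i)))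

/-- `J_η`: the (unique) subset of `Λ_{3,n}` with `A_n(J_η) = T'_η`. -/
noncomputable def Jset (n : ℕ) (η : OmegaData) : Finset (ℕ × ℕ × ℕ) :=
  (Lam3 n).filter (fun β => Amap n β ∈ Tset' n η)

/-- `z_k = 1` iff `f_k((1,0)) ≤ f_k((n,n+1))`. -/
def zk (n k : ℕ) : Bool := decide (fk k (1, 0) ≤ fk k (n, n+1))

/-- `t_l` in the recursive definition of `η_k`, where `O`, `E` are the odd- and
even-indexed partial sums `Σ_{j<l, j odd} d_{k,j}` and `Σ_{j<l, j even} d_{k,j}`. -/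
noncomputable def tval (n k : ℕ) (l O E : ℕ) : ℕ :=
  let w := (if Odd l then E else O) + 1
  if ((zk n k = true) ↔ Odd l) then
    sSup {m : ℕ | (m : ℤ) * fk k (1, 0) ≤ fk k (w * n, w * (n+1))}
  else
    sSup {m : ℕ | (m : ℤ) * fk k (n, n+1) ≤ fk k (w, 0)}

/-- The pair `(Σ_{j≤l, j odd} d_{k,j}, Σ_{j≤l, j even} d_{k,j})` of the recursion
defining `η_k`. -/
noncomputable def oeSums (n k : ℕ) : ℕ → ℕ × ℕ
  | 0 => (0, 0)
  | l + 1 =>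
    let p := oeSums n k l
    let O := p.1
    let E := p.2
    let S := O + E
    let dnext := if S < n then
        min (n - S) (tval n k (l+1) O E - (if Odd (l+1) then O else E))
      else 0
    if Odd (l+1) then (O + dnext, E) else (O, E + dnext)

/-- `d_{k,l}`. -/
noncomputable def dk (n k : ℕ) : ℕ → ℕ
  | 0 => 0
  | l + 1 =>
    let p := oeSums n k l
    let O := p.1
    let E := p.2
    let S := O + E
    if S < n then
      min (n - S) (tval n k (l+1) O E - (if Odd (l+1) then O else E))
    else 0

/-- `η_k = (z_k, d_{k,0}, …, d_{k,r})`, where `r` is the first index with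
`Σ_{j=0}^{r} d_{k,j} = n`. -/
noncomputable def etak (n k : ℕ) : OmegaData :=
  { r := sInf {r | ∑ j ∈ range (r+1), dk n k j = n},
    z := zk n k,
    d := dk n k }

set_option maxHeartbeats 1000000 in
theorem stmt13 (n : ℕ) (hn : 1 ≤ n) (a r l : ℕ) (hl1 : 1 ≤ l) (hln : l ≤ n) :
    (∑ i ∈ range (l+1), ((-1 : ℂ) ^ i * (l.choose i : ℂ)) •
      ∑ j ∈ range (n-l+2), ((-1 : ℂ) ^ (n-l+1+j) * ((n-l+1).choose j : ℂ)) •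
        vbar n (a+r+j, r+i+j)) = 0 ∧
    ∀ α ∈ Lam2 n,
      (∑ i ∈ range (l+1), ∑ j ∈ range (n-l+2),
        (-1 : ℂ) ^ (n-l+1+i+j) * (l.choose i : ℂ) * ((n-l+1).choose j : ℂ) *
          ((a+r+j).choose α.1 : ℂ) * ((r+i+j).choose α.2 : ℂ)) = 0 := by
  constructor
  · funext α
    have hαn : α.1.1 + α.1.2 ≤ n := (Finset.mem_filter.mp α.2).2.2
    simp only [Finset.sum_apply, Pi.smul_apply, smul_eq_mul, Pi.zero_apply, vbar]
    calc ∑ i ∈ range (l+1), (-1:ℂ)^i * (l.choose i : ℂ) *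
          ∑ j ∈ range (n-l+2), (-1:ℂ)^(n-l+1+j) * ((n-l+1).choose j : ℂ) *
            (((a+r+j).choose α.1.1 * (r+i+j).choose α.1.2 : ℕ) : ℂ)
        = ∑ i ∈ range (l+1), ∑ j ∈ range (n-l+2),
            (-1:ℂ)^(n-l+1+i+j) * (l.choose i : ℂ) * ((n-l+1).choose j : ℂ) *
              ((a+r+j).choose α.1.1 : ℂ) * ((r+i+j).choose α.1.2 : ℂ) := by
          apply Finset.sum_congr rfl; intro i _
          rw [Finset.mul_sum]
          apply Finset.sum_congr rfl; intro j _
          push_cast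
          rw [show n-l+1+i+j = i + (n-l+1+j) by omega, pow_add]
          ring
      _ = 0 := key n a r l hln α.1.1 α.1.2 hαn
  · intro α hα
    have hαn : α.1 + α.2 ≤ n := (Finset.mem_filter.mp hα).2.2
    exact key n a r l hln α.1 α.2 hαn
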